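/- Let ν > −1 and let N be a nonnegative integer. Define T^ν_{N,n}(x) = x^{N + 1/2} · (N! n! / (N + n)!) · P_n^{(N,ν)}(1 − 2x²). Then for all nonnegative integers n, m: ∫₀¹ T^ν_{N,n}(x) T^ν_{N,m}(x) (1 − x²)^ν dx = δ_{n,m} · n! (N!)² Γ(n + ν + 1) / ( 2 (2n + N + ν + 1) (n + N)! Γ(n + N + ν + 1) ), where δ_{n,m} is the Kronecker delta. -/

import Mathlib

open Real MeasureTheory

/-- Pochhammer symbol `(a)_k = a (a+1) ⋯ (a+k-1)`. -/
noncomputable def poch (a : ℝ) (k : ℕ) : ℝ := ∏ i ∈ Finset.range k, (a + i)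

/-- Bessel function of the first kind of real order `μ`, via its defining series. -/
noncomputable def besselJ (μ x : ℝ) : ℝ :=
  ∑' k : ℕ, (-1) ^ k / (k.factorial * Real.Gamma (μ + k + 1)) * (x / 2) ^ (2 * (k : ℝ) + μ)

/-- Jacobi polynomial `P_n^{(α,β)}(x)` via its hypergeometric series. -/
noncomputable def jacobiP (α β : ℝ) (n : ℕ) (x : ℝ) : ℝ :=
  poch (α + 1) n / n.factorial *
    ∑ k ∈ Finset.range (n + 1),
      poch (-(n : ℝ)) k * poch ((n : ℝ) + α + β + 1) k / (poch (α + 1) k * k.factorial) *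
        ((1 - x) / 2) ^ k

/-- `T^ν_{N,n}(x) = x^{N+1/2} (N! n!/(N+n)!) P_n^{(N,ν)}(1-2x²)`. -/
noncomputable def Tfun (ν : ℝ) (N n : ℕ) (x : ℝ) : ℝ :=
  x ^ ((N : ℝ) + 1 / 2) * ((N.factorial * n.factorial : ℝ) / (N + n).factorial) *
    jacobiP N ν n (1 - 2 * x ^ 2)

/-! ### Auxiliary lemmas on the Pochhammer symbol and falling factorials -/

/-- falling factorial -/
noncomputable def ffall (x : ℝ) (k : ℕ) : ℝ := ∏ i ∈ Finset.range k, (x - i)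

lemma poch_zero (a : ℝ) : poch a 0 = 1 := Finset.prod_range_zero _

lemma poch_succ (a : ℝ) (k : ℕ) : poch a (k + 1) = poch a k * (a + k) :=
  Finset.prod_range_succ _ _

lemma ffall_zero (x : ℝ) : ffall x 0 = 1 := Finset.prod_range_zero _

lemma ffall_succ (x : ℝ) (k : ℕ) : ffall x (k + 1) = ffall x k * (x - k) :=
  Finset.prod_range_succ _ _

lemma poch_add (a : ℝ) (j k : ℕ) : poch a (j + k) = poch a j * poch (a + j) k := by
  induction k with
  | zero => simp [poch_zero]
  | succ k ih =>
      rw [← Nat.add_assoc, poch_succ, ih, poch_succ]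
      push_cast; ring

lemma poch_pos {a : ℝ} (ha : 0 < a) (k : ℕ) : 0 < poch a k := by
  apply Finset.prod_pos
  intro i _
  positivity

lemma poch_ne_zero {a : ℝ} (ha : 0 < a) (k : ℕ) : poch a k ≠ 0 := (poch_pos ha k).ne'

lemma poch_nat_factorial (N k : ℕ) :
    (N.factorial : ℝ) * poch ((N : ℝ) + 1) k = ((N + k).factorial : ℝ) := by
  induction k with
  | zero => simp [poch_zero]
  | succ k ih =>
      rw [poch_succ, ← mul_assoc, ih, ← Nat.add_assoc, Nat.factorial_succ]
      push_cast; ring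

lemma poch_one_eq (m : ℕ) : poch 1 m = m.factorial := by
  simpa using poch_nat_factorial 0 m

lemma poch_succ' (a : ℝ) (k : ℕ) : poch a (k + 1) = a * poch (a + 1) k := by
  have h := poch_add a 1 k
  rw [Nat.add_comm 1 k] at h
  rw [h]
  simp [poch]

lemma ffall_nat_eq (m : ℕ) : ∀ l : ℕ, l ≤ m → ffall (m : ℝ) l = (m.choose l : ℝ) * l.factorial := by
  intro l
  induction l with
  | zero => simp [ffall_zero]
  | succ l ih =>
      intro hl
      have hl' : l ≤ m := Nat.le_of_succ_le hl
      rw [ffall_succ, ih hl']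
      have h2 : m.choose (l+1) * (l+1) = m.choose l * (m - l) := Nat.choose_succ_right_eq m l
      have hc : (m.choose (l+1) : ℝ) * ((l:ℝ)+1) = (m.choose l : ℝ) * ((m:ℝ) - l) := by
        have h3 := congrArg (fun t : ℕ => (t : ℝ)) h2
        push_cast [Nat.cast_sub hl'] at h3
        linarith
      rw [Nat.factorial_succ]
      push_cast
      nlinarith [hc]

lemma poch_neg_nat (m : ℕ) (l : ℕ) : poch (-(m : ℝ)) l = (-1) ^ l * ffall (m : ℝ) l := by
  induction l with
  | zero => simp [poch_zero, ffall_zero]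
  | succ l ih =>
      rw [poch_succ, ffall_succ, ih]
      ring

lemma neg_pow_mul_poch (b : ℝ) (l : ℕ) : (-1) ^ l * poch b l = ffall (-b) l := by
  induction l with
  | zero => simp [poch_zero, ffall_zero]
  | succ l ih =>
      rw [poch_succ, ffall_succ, ← ih]
      ring

lemma poch_eq_ffall (a : ℝ) (k : ℕ) : poch a k = ffall (a + k - 1) k := by
  unfold poch ffall
  rw [← Finset.prod_range_reflect]
  apply Finset.prod_congr rfl
  intro i hi
  have hik : i < k := Finset.mem_range.mp hi
  have : ((k - 1 - i : ℕ) : ℝ) = (k : ℝ) - 1 - (i : ℝ) := by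
    rw [Nat.cast_sub (by omega), Nat.cast_sub (by omega)]
    push_cast; ring
  rw [this]; ring

/-- Vandermonde for falling factorials. -/
lemma ffall_vandermonde (x y : ℝ) : ∀ m : ℕ,
    ∑ l ∈ Finset.range (m + 1), (m.choose l : ℝ) * ffall x l * ffall y (m - l)
      = ffall (x + y) m := by
  intro m
  induction m with
  | zero => simp [ffall_zero]
  | succ m ih =>
      have key : ffall (x + y) (m + 1) = ∑ l ∈ Finset.range (m + 1),
          (m.choose l : ℝ) * ffall x l * ffall y (m - l) * ((x - l) + (y - ((m - l : ℕ) : ℝ))) := by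
        rw [ffall_succ, ← ih, Finset.sum_mul]
        apply Finset.sum_congr rfl
        intro l hl
        have hl' : l ≤ m := Nat.lt_succ_iff.mp (Finset.mem_range.mp hl)
        rw [Nat.cast_sub hl']
        ring
      have split : ∑ l ∈ Finset.range (m + 1),
          (m.choose l : ℝ) * ffall x l * ffall y (m - l) * ((x - l) + (y - ((m - l : ℕ) : ℝ)))
          = (∑ l ∈ Finset.range (m + 1), (m.choose l : ℝ) * ffall x (l + 1) * ffall y (m - l))
            + (∑ l ∈ Finset.range (m + 1), (m.choose l : ℝ) * ffall x l * ffall y ((m - l) + 1)) := by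
        rw [← Finset.sum_add_distrib]
        apply Finset.sum_congr rfl
        intro l hl
        rw [ffall_succ x l, ffall_succ y (m - l)]
        ring
      set A := ∑ l ∈ Finset.range (m + 1), (m.choose l : ℝ) * ffall x (l + 1) * ffall y (m - l) with hA
      set B := ∑ l ∈ Finset.range (m + 1), (m.choose l : ℝ) * ffall x l * ffall y ((m - l) + 1) with hB
      set B' := ∑ l ∈ Finset.range (m + 1), (m.choose (l+1) : ℝ) * ffall x (l + 1) * ffall y (m - l)
        with hB'
      have hBB' : B = B' + ffall y (m + 1) := by
        rw [hB, Finset.sum_range_succ' (fun l => (m.choose l : ℝ) * ffall x l * ffall y ((m - l) + 1)) m]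
        rw [hB', Finset.sum_range_succ (fun l => (m.choose (l+1) : ℝ) * ffall x (l + 1) * ffall y (m - l)) m]
        simp only [Nat.choose_zero_right, Nat.cast_one, ffall_zero, Nat.sub_zero,
          Nat.choose_succ_self, Nat.cast_zero, zero_mul, add_zero, one_mul, mul_one]
        congr 1
        apply Finset.sum_congr rfl
        intro l hl
        have hlm : l < m := Finset.mem_range.mp hl
        have : m - (l + 1) + 1 = m - l := by omega
        rw [this]
      have target : ∑ l ∈ Finset.range (m + 1 + 1),
          ((m+1).choose l : ℝ) * ffall x l * ffall y (m + 1 - l) = A + B' + ffall y (m+1) := by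
        rw [Finset.sum_range_succ' (fun l => ((m+1).choose l : ℝ) * ffall x l * ffall y (m + 1 - l)) (m+1)]
        simp only [Nat.choose_succ_succ, Nat.choose_zero_right, Nat.cast_add, Nat.cast_one,
          ffall_zero, Nat.sub_zero, mul_one, one_mul]
        congr 1
        rw [hA, hB', ← Finset.sum_add_distrib]
        apply Finset.sum_congr rfl
        intro l hl
        have : m + 1 - (l + 1) = m - l := by omega
        rw [this]
        push_cast; ring
      rw [target, key, split, hBB']
      ring

/-- Chu–Vandermonde. -/
lemma chu_vandermonde (b c : ℝ) (m : ℕ) (hc : ∀ j ∈ Finset.range m, c + (j : ℝ) ≠ 0) :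
    ∑ l ∈ Finset.range (m + 1),
      poch (-(m : ℝ)) l * poch b l / (poch c l * l.factorial)
      = poch (c - b) m / poch c m := by
  have hpochc : poch c m ≠ 0 := by
    unfold poch
    exact Finset.prod_ne_zero_iff.mpr (fun i hi => hc i hi)
  have main : ∑ l ∈ Finset.range (m + 1),
      poch (-(m : ℝ)) l * poch b l / (poch c l * l.factorial) * poch c m
      = poch (c - b) m := by
    have step : ∀ l ∈ Finset.range (m + 1),
        poch (-(m : ℝ)) l * poch b l / (poch c l * l.factorial) * poch c m
        = (m.choose l : ℝ) * ffall (-b) l * ffall (c + m - 1) (m - l) := by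
      intro l hl
      have hlm : l ≤ m := Nat.lt_succ_iff.mp (Finset.mem_range.mp hl)
      have hsplit : poch c m = poch c l * poch (c + l) (m - l) := by
        have : l + (m - l) = m := by omega
        conv_lhs => rw [← this]
        rw [poch_add]
      have hcl : poch c l ≠ 0 := by
        unfold poch
        refine Finset.prod_ne_zero_iff.mpr (fun i hi => ?_)
        exact hc i (Finset.mem_range.mpr (lt_of_lt_of_le (Finset.mem_range.mp hi) hlm))
      have hfact : (l.factorial : ℝ) ≠ 0 := Nat.cast_ne_zero.mpr (Nat.factorial_ne_zero l)
      rw [hsplit]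
      have h1 : poch (-(m:ℝ)) l = (-1)^l * ((m.choose l : ℝ) * l.factorial) := by
        rw [poch_neg_nat, ffall_nat_eq m l hlm]
      have h2 : poch (c + l) (m - l) = ffall (c + m - 1) (m - l) := by
        rw [poch_eq_ffall]
        congr 1
        rw [Nat.cast_sub hlm]
        ring
      have h3 : (-1:ℝ)^l * poch b l = ffall (-b) l := neg_pow_mul_poch b l
      rw [h1, h2, ← h3]
      field_simp
    rw [Finset.sum_congr rfl step]
    rw [ffall_vandermonde]
    rw [poch_eq_ffall]
    congr 1
    ring
  have := main
  rw [← Finset.sum_mul] at this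
  field_simp at this ⊢
  linarith [this]

/-! ### Gamma and Beta integrals -/

lemma Gamma_add_nat {t : ℝ} (ht : 0 < t) (j : ℕ) :
    Real.Gamma (t + j) = Real.Gamma t * poch t j := by
  induction j with
  | zero => simp [poch_zero]
  | succ j ih =>
      have h1 : t + (j + 1 : ℕ) = (t + j) + 1 := by push_cast; ring
      rw [h1, Real.Gamma_add_one (by positivity), ih, poch_succ]
      ring

lemma beta_integrable (K : ℕ) {s : ℝ} (hs : -1 < s) :
    IntervalIntegrable (fun x : ℝ => x ^ K * (1 - x) ^ s) volume 0 1 := by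
  have h1 : IntervalIntegrable (fun x : ℝ => x ^ s) volume 0 1 :=
    intervalIntegral.intervalIntegrable_rpow' hs
  have h2 : IntervalIntegrable (fun x : ℝ => (1 - x) ^ s) volume 0 1 := by
    have := (h1.comp_sub_left 1).symm
    simpa using this
  have h3 := h2.mul_continuousOn (g := fun x : ℝ => x ^ K)
    (by fun_prop : ContinuousOn (fun x : ℝ => x ^ K) (Set.uIcc 0 1))
  have : (fun x : ℝ => x ^ K * (1 - x) ^ s) = fun x : ℝ => (1 - x) ^ s * x ^ K := by
    funext x; exact mul_comm _ _
  rw [this]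
  exact h3

lemma beta_nat (K : ℕ) {s : ℝ} (hs : -1 < s) :
    ∫ x in (0:ℝ)..1, x ^ K * (1 - x) ^ s = (K.factorial : ℝ) / poch (s + 1) (K + 1) := by
  have hs1 : (0:ℝ) < s + 1 := by linarith
  have hG := Complex.Gamma_mul_Gamma_eq_betaIntegral
    (s := (K:ℂ) + 1) (t := (s:ℂ) + 1)
    (by simpa using (by positivity : (0:ℝ) < (K:ℝ) + 1)) (by simpa using hs1)
  have hBeta : Complex.betaIntegral ((K:ℂ) + 1) ((s:ℂ) + 1)
      = ((∫ x in (0:ℝ)..1, x ^ K * (1 - x) ^ s : ℝ) : ℂ) := by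
    rw [Complex.betaIntegral, ← intervalIntegral.integral_ofReal]
    apply intervalIntegral.integral_congr
    intro x hx
    simp only
    rw [Set.uIcc_of_le (by norm_num : (0:ℝ) ≤ 1)] at hx
    have hx1 : 0 ≤ 1 - x := by linarith [hx.2]
    have e1 : ((K:ℂ) + 1 - 1) = (K : ℂ) := by ring
    have e2 : ((s:ℂ) + 1 - 1) = (s : ℂ) := by ring
    rw [e1, e2, Complex.cpow_natCast,
      show ((1:ℂ) - (x:ℂ)) = ((1 - x : ℝ) : ℂ) by push_cast; ring,
      ← Complex.ofReal_cpow hx1]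
    push_cast
    ring
  rw [hBeta] at hG
  have hGK : Complex.Gamma ((K:ℂ) + 1) = (K.factorial : ℂ) := Complex.Gamma_nat_eq_factorial K
  have hGs : Complex.Gamma ((s:ℂ) + 1) = ((Real.Gamma (s+1) : ℝ) : ℂ) := by
    rw [show ((s:ℂ) + 1) = ((s + 1 : ℝ) : ℂ) by push_cast; ring, Complex.Gamma_ofReal]
  have hGsum : Complex.Gamma ((K:ℂ) + 1 + ((s:ℂ) + 1))
      = ((Real.Gamma (s+1) * poch (s+1) (K+1) : ℝ) : ℂ) := by
    rw [show ((K:ℂ) + 1 + ((s:ℂ) + 1)) = (((s+1) + ((K+1:ℕ):ℕ) : ℝ) : ℂ) by push_cast; ring,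
      Complex.Gamma_ofReal, Gamma_add_nat hs1]
  rw [hGK, hGs, hGsum] at hG
  have hreal : (K.factorial : ℝ) * Real.Gamma (s+1)
      = Real.Gamma (s+1) * poch (s+1) (K+1) * ∫ x in (0:ℝ)..1, x ^ K * (1 - x) ^ s := by
    exact_mod_cast hG
  have hGpos : 0 < Real.Gamma (s+1) := Real.Gamma_pos_of_pos hs1
  have hpoch : 0 < poch (s+1) (K+1) := poch_pos hs1 _
  rw [eq_div_iff (ne_of_gt hpoch)]
  apply mul_left_cancel₀ (ne_of_gt hGpos)
  linear_combination -hreal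

lemma sq_image_Ioo : (fun x : ℝ => x ^ 2) '' Set.Ioo 0 1 = Set.Ioo (0:ℝ) 1 := by
  ext y
  constructor
  · rintro ⟨x, ⟨hx0, hx1⟩, rfl⟩
    simp only [Set.mem_Ioo]
    constructor
    · positivity
    · nlinarith
  · rintro ⟨hy0, hy1⟩
    refine ⟨Real.sqrt y, ⟨Real.sqrt_pos.mpr hy0, ?_⟩, ?_⟩
    · have := Real.sqrt_lt_sqrt (le_of_lt hy0) hy1
      simpa using this
    · simp only
      rw [sq, Real.mul_self_sqrt (le_of_lt hy0)]

lemma sq_injOn : Set.InjOn (fun x : ℝ => x ^ 2) (Set.Ioo 0 1) := by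
  intro a ha b hb h
  simp only at h
  nlinarith [ha.1, hb.1, sq_nonneg (a - b), sq_nonneg (a + b)]

lemma sq_hasDeriv : ∀ x ∈ Set.Ioo (0:ℝ) 1,
    HasDerivWithinAt (fun x : ℝ => x ^ 2) (2 * x) (Set.Ioo 0 1) x := by
  intro x _
  simpa using (hasDerivAt_pow 2 x).hasDerivWithinAt

lemma J_integrable (K : ℕ) {s : ℝ} (hs : -1 < s) :
    IntervalIntegrable (fun x : ℝ => x ^ (2 * K + 1) * (1 - x ^ 2) ^ s) volume 0 1 := by
  have hu : IntegrableOn (fun u : ℝ => u ^ K * (1 - u) ^ s) (Set.Ioo 0 1) := by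
    have := (beta_integrable K hs).1
    exact this.mono_set Set.Ioo_subset_Ioc_self
  have hx : IntegrableOn
      (fun x : ℝ => |2 * x| • (fun u : ℝ => u ^ K * (1 - u) ^ s) (x ^ 2)) (Set.Ioo 0 1) :=
    (integrableOn_image_iff_integrableOn_abs_deriv_smul measurableSet_Ioo sq_hasDeriv sq_injOn
      (fun u : ℝ => u ^ K * (1 - u) ^ s)).mp (by rw [sq_image_Ioo]; exact hu)
  have hx2 : IntegrableOn (fun x : ℝ => 2 * (x ^ (2*K+1) * (1 - x^2) ^ s)) (Set.Ioo 0 1) := by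
    apply hx.congr_fun ?_ measurableSet_Ioo
    intro x hx'
    have h0 : (0:ℝ) < x := hx'.1
    simp only [smul_eq_mul]
    rw [abs_of_pos (by linarith : (0:ℝ) < 2 * x), ← pow_mul]
    ring
  have hx3 : IntegrableOn (fun x : ℝ => x ^ (2*K+1) * (1 - x^2) ^ s) (Set.Ioo 0 1) := by
    have h : IntegrableOn
        (fun x : ℝ => (2⁻¹:ℝ) * (2 * (x ^ (2*K+1) * (1 - x^2) ^ s))) (Set.Ioo 0 1) :=
      hx2.const_mul _
    apply h.congr_fun ?_ measurableSet_Ioo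
    intro x _
    simp only
    ring
  rw [intervalIntegrable_iff_integrableOn_Ioc_of_le (by norm_num : (0:ℝ) ≤ 1),
    integrableOn_Ioc_iff_integrableOn_Ioo]
  exact hx3

lemma J_value (K : ℕ) {s : ℝ} (hs : -1 < s) :
    ∫ x in (0:ℝ)..1, x ^ (2 * K + 1) * (1 - x ^ 2) ^ s
      = (K.factorial : ℝ) / (2 * poch (s + 1) (K + 1)) := by
  have h1 : ∫ x in (0:ℝ)..1, x ^ (2 * K + 1) * (1 - x ^ 2) ^ s
      = ∫ x in Set.Ioo (0:ℝ) 1, x ^ (2 * K + 1) * (1 - x ^ 2) ^ s := by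
    rw [intervalIntegral.integral_of_le (by norm_num : (0:ℝ) ≤ 1), integral_Ioc_eq_integral_Ioo]
  have h2 : ∫ u in Set.Ioo (0:ℝ) 1, (fun u : ℝ => u ^ K * (1 - u) ^ s) u
      = ∫ x in Set.Ioo (0:ℝ) 1, |2 * x| • (fun u : ℝ => u ^ K * (1 - u) ^ s) (x ^ 2) := by
    conv_lhs => rw [← sq_image_Ioo]
    exact integral_image_eq_integral_abs_deriv_smul measurableSet_Ioo sq_hasDeriv sq_injOn _
  have h3 : ∫ x in Set.Ioo (0:ℝ) 1, |2 * x| • (fun u : ℝ => u ^ K * (1 - u) ^ s) (x ^ 2)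
      = 2 * ∫ x in Set.Ioo (0:ℝ) 1, x ^ (2 * K + 1) * (1 - x ^ 2) ^ s := by
    rw [← MeasureTheory.integral_const_mul]
    apply setIntegral_congr_fun measurableSet_Ioo
    intro x hx'
    have h0 : (0:ℝ) < x := hx'.1
    simp only [smul_eq_mul]
    rw [abs_of_pos (by linarith : (0:ℝ) < 2 * x), ← pow_mul]
    ring
  have h4 : ∫ u in Set.Ioo (0:ℝ) 1, u ^ K * (1 - u) ^ s
      = (K.factorial : ℝ) / poch (s + 1) (K + 1) := by
    rw [← integral_Ioc_eq_integral_Ioo,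
      ← intervalIntegral.integral_of_le (by norm_num : (0:ℝ) ≤ 1)]
    exact beta_nat K hs
  rw [h1]
  have hmain := h4.symm.trans h2
  rw [h3] at hmain
  have e : (K.factorial : ℝ) / (2 * poch (s + 1) (K + 1))
      = ((K.factorial : ℝ) / poch (s + 1) (K + 1)) / 2 := by ring
  rw [e]
  linarith

/-! ### The Jacobi coefficients -/

/-- coefficients of the Jacobi polynomial in powers of `u = x²`. -/
noncomputable def aco (ν : ℝ) (N n : ℕ) (k : ℕ) : ℝ :=
  poch (-(n:ℝ)) k * poch ((n:ℝ) + N + ν + 1) k / (poch ((N:ℝ) + 1) k * k.factorial)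

/-- coefficients in powers of `1 - u`. -/
noncomputable def cco (ν : ℝ) (N n : ℕ) (i : ℕ) : ℝ :=
  (-1)^i * ∑ k ∈ Finset.range (n+1), aco ν N n k * (k.choose i : ℝ)

lemma Tfun_eq (ν : ℝ) (N n : ℕ) (x : ℝ) :
    Tfun ν N n x = x ^ ((N : ℝ) + 1 / 2) *
      ∑ k ∈ Finset.range (n + 1), aco ν N n k * (x ^ 2) ^ k := by
  unfold Tfun jacobiP
  have hsum : ∑ k ∈ Finset.range (n + 1),
      poch (-(n : ℝ)) k * poch ((n : ℝ) + N + ν + 1) k / (poch ((N:ℝ) + 1) k * k.factorial) *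
        ((1 - (1 - 2 * x ^ 2)) / 2) ^ k
      = ∑ k ∈ Finset.range (n + 1), aco ν N n k * (x ^ 2) ^ k := by
    apply Finset.sum_congr rfl
    intro k _
    unfold aco
    congr 1
    congr 1
    ring
  rw [hsum]
  have hconst : ((N.factorial * n.factorial : ℝ) / (N + n).factorial) *
      (poch ((N:ℝ) + 1) n / n.factorial) = 1 := by
    have h := poch_nat_factorial N n
    have h1 : ((N + n).factorial : ℝ) ≠ 0 := Nat.cast_ne_zero.mpr (Nat.factorial_ne_zero _)
    have h2 : (n.factorial : ℝ) ≠ 0 := Nat.cast_ne_zero.mpr (Nat.factorial_ne_zero _)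
    field_simp
    linear_combination h
  calc x ^ ((N : ℝ) + 1 / 2) * ((N.factorial * n.factorial : ℝ) / (N + n).factorial) *
        (poch ((N:ℝ) + 1) n / n.factorial * ∑ k ∈ Finset.range (n + 1), aco ν N n k * (x ^ 2) ^ k)
      = x ^ ((N : ℝ) + 1 / 2) * (((N.factorial * n.factorial : ℝ) / (N + n).factorial) *
          (poch ((N:ℝ) + 1) n / n.factorial)) *
          ∑ k ∈ Finset.range (n + 1), aco ν N n k * (x ^ 2) ^ k := by ring
    _ = _ := by rw [hconst]; ring

lemma expand_in_one_sub (ν : ℝ) (N n : ℕ) (u : ℝ) :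
    ∑ k ∈ Finset.range (n + 1), aco ν N n k * u ^ k
      = ∑ i ∈ Finset.range (n + 1), cco ν N n i * (1 - u) ^ i := by
  have step1 : ∀ k ∈ Finset.range (n + 1),
      (u : ℝ) ^ k = ∑ i ∈ Finset.range (n + 1), (u - 1) ^ i * (k.choose i : ℝ) := by
    intro k hk
    have hkn : k ≤ n := Nat.lt_succ_iff.mp (Finset.mem_range.mp hk)
    have h := add_pow (u - 1) 1 k
    simp only [one_pow, mul_one] at h
    have h' : u ^ k = ∑ i ∈ Finset.range (k + 1), (u - 1) ^ i * (k.choose i : ℝ) := by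
      conv_lhs => rw [show u = (u - 1) + 1 by ring]
      rw [h]
    rw [h']
    apply Finset.sum_subset
    · exact Finset.range_subset_range.mpr (by omega)
    · intro i _ hi
      have : k < i := by
        simp only [Finset.mem_range] at hi
        omega
      rw [Nat.choose_eq_zero_of_lt this]
      simp
  calc ∑ k ∈ Finset.range (n + 1), aco ν N n k * u ^ k
      = ∑ k ∈ Finset.range (n + 1), ∑ i ∈ Finset.range (n + 1),
          aco ν N n k * ((u - 1) ^ i * (k.choose i : ℝ)) := by
        apply Finset.sum_congr rfl
        intro k hk
        rw [step1 k hk, Finset.mul_sum]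
    _ = ∑ i ∈ Finset.range (n + 1), ∑ k ∈ Finset.range (n + 1),
          aco ν N n k * ((u - 1) ^ i * (k.choose i : ℝ)) := Finset.sum_comm
    _ = ∑ i ∈ Finset.range (n + 1), cco ν N n i * (1 - u) ^ i := by
        apply Finset.sum_congr rfl
        intro i _
        unfold cco
        rw [Finset.mul_sum, Finset.sum_mul]
        apply Finset.sum_congr rfl
        intro k _
        have : (u - 1) ^ i = (-1) ^ i * (1 - u) ^ i := by
          rw [show u - 1 = -(1 - u) by ring, neg_pow]
        rw [this]
        ring

lemma G_eval (ν : ℝ) (hν : ν > -1) (N m : ℕ) (i : ℕ) :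
    ∑ l ∈ Finset.range (m + 1),
      aco ν N m l * (((N + l).factorial : ℝ) / poch (ν + i + 1) (N + l + 1))
      = (N.factorial : ℝ) * poch ((i:ℝ) + 1 - m) m /
          (poch (ν + i + 1) (N + 1) * poch (ν + i + N + 2) m) := by
  have hbase : (0:ℝ) < ν + i + 1 := by
    have : (0:ℝ) ≤ i := Nat.cast_nonneg i
    linarith
  have hc : (0:ℝ) < ν + i + N + 2 := by
    have h1 : (0:ℝ) ≤ i := Nat.cast_nonneg i
    have h2 : (0:ℝ) ≤ N := Nat.cast_nonneg N
    linarith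
  have step : ∀ l ∈ Finset.range (m + 1),
      aco ν N m l * (((N + l).factorial : ℝ) / poch (ν + i + 1) (N + l + 1))
      = ((N.factorial : ℝ) / poch (ν + i + 1) (N + 1)) *
          (poch (-(m:ℝ)) l * poch ((m:ℝ) + N + ν + 1) l / (poch (ν + i + N + 2) l * l.factorial)) := by
    intro l hl
    unfold aco
    have hfac : ((N + l).factorial : ℝ) = (N.factorial : ℝ) * poch ((N:ℝ) + 1) l :=
      (poch_nat_factorial N l).symm
    have hps : poch (ν + i + 1) (N + l + 1) = poch (ν + i + 1) (N + 1) * poch (ν + i + N + 2) l := by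
      have h := poch_add (ν + i + 1) (N + 1) l
      rw [show N + 1 + l = N + l + 1 by omega] at h
      rw [h]
      congr 1
      push_cast
      ring
    rw [hfac, hps]
    have hpN1 : poch ((N:ℝ) + 1) l ≠ 0 := poch_ne_zero (by positivity) l
    have hp1 : poch (ν + i + 1) (N + 1) ≠ 0 := poch_ne_zero hbase _
    have hp2 : poch (ν + i + N + 2) l ≠ 0 := poch_ne_zero hc _
    have hfl : (l.factorial : ℝ) ≠ 0 := Nat.cast_ne_zero.mpr (Nat.factorial_ne_zero l)
    field_simp
  rw [Finset.sum_congr rfl step, ← Finset.mul_sum]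
  rw [chu_vandermonde ((m:ℝ) + N + ν + 1) (ν + i + N + 2) m
    (fun j _ => by positivity)]
  rw [show ν + i + N + 2 - ((m:ℝ) + N + ν + 1) = (i:ℝ) + 1 - m by ring]
  have hp1 : poch (ν + i + 1) (N + 1) ≠ 0 := poch_ne_zero hbase _
  have hp2 : poch (ν + i + N + 2) m ≠ 0 := poch_ne_zero hc _
  field_simp

lemma poch_neg_vanish {i m : ℕ} (h : i < m) : poch ((i:ℝ) + 1 - m) m = 0 := by
  unfold poch
  apply Finset.prod_eq_zero (i := m - 1 - i) (Finset.mem_range.mpr (by omega))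
  have : ((m - 1 - i : ℕ) : ℝ) = (m : ℝ) - 1 - i := by
    rw [Nat.cast_sub (by omega), Nat.cast_sub (by omega)]
    push_cast; ring
  rw [this]
  ring

/-! ### The main computation -/

lemma key_orthogonality (ν : ℝ) (hν : ν > -1) (N n m : ℕ) (hnm : n ≤ m) :
    ∫ x in (0:ℝ)..1, Tfun ν N n x * Tfun ν N m x * (1 - x ^ 2) ^ ν
      = (if n = m then (1:ℝ) else 0) *
          ((n.factorial : ℝ) * (N.factorial : ℝ) ^ 2 * Real.Gamma (n + ν + 1) /
            (2 * (2 * n + N + ν + 1) * (n + N).factorial * Real.Gamma (n + N + ν + 1))) := by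
  -- Step A: rewrite the integrand as a finite sum on (0,1)
  set F : ℝ → ℝ := fun x => ∑ p ∈ Finset.range (n+1) ×ˢ Finset.range (m+1),
    cco ν N n p.1 * aco ν N m p.2 * (x ^ (2*(N+p.2)+1) * (1 - x^2) ^ (ν + p.1)) with hF
  have hEq : Set.EqOn (fun x => Tfun ν N n x * Tfun ν N m x * (1 - x ^ 2) ^ ν) F
      (Set.Ioo 0 1) := by
    intro x hx
    have hx0 : (0:ℝ) < x := hx.1
    have hx1 : x < 1 := hx.2
    have h1x : (0:ℝ) < 1 - x^2 := by nlinarith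
    simp only
    rw [Tfun_eq, Tfun_eq, expand_in_one_sub]
    have hxx : x ^ ((N : ℝ) + 1 / 2) * x ^ ((N : ℝ) + 1 / 2) = x ^ (2*N+1 : ℕ) := by
      rw [← Real.rpow_add hx0, ← Real.rpow_natCast x (2*N+1)]
      congr 1
      push_cast
      ring
    calc (x ^ ((N : ℝ) + 1 / 2) * ∑ i ∈ Finset.range (n + 1), cco ν N n i * (1 - x^2) ^ i) *
          (x ^ ((N : ℝ) + 1 / 2) * ∑ l ∈ Finset.range (m + 1), aco ν N m l * (x ^ 2) ^ l) *
          (1 - x ^ 2) ^ ν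
        = (x ^ ((N : ℝ) + 1 / 2) * x ^ ((N : ℝ) + 1 / 2)) *
            ((∑ i ∈ Finset.range (n + 1), cco ν N n i * (1 - x^2) ^ i) *
              (∑ l ∈ Finset.range (m + 1), aco ν N m l * (x ^ 2) ^ l)) * (1 - x ^ 2) ^ ν := by
          ring
      _ = ∑ p ∈ Finset.range (n+1) ×ˢ Finset.range (m+1),
            x ^ (2*N+1 : ℕ) * (cco ν N n p.1 * (1 - x^2) ^ p.1 *
              (aco ν N m p.2 * (x ^ 2) ^ p.2)) * (1 - x ^ 2) ^ ν := by
          rw [hxx, Finset.sum_mul_sum, ← Finset.sum_product']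
          rw [Finset.mul_sum, Finset.sum_mul]
      _ = F x := by
          rw [hF]
          apply Finset.sum_congr rfl
          rintro ⟨i, l⟩ _
          simp only
          have hp : x ^ (2*N+1 : ℕ) * (x^2) ^ l = x ^ (2*(N+l)+1) := by
            rw [← pow_mul, ← pow_add]
            congr 1
            ring
          have hr : (1 - x^2) ^ (i : ℕ) * (1 - x^2) ^ ν = (1 - x^2) ^ (ν + i) := by
            rw [← Real.rpow_natCast (1 - x^2) i, ← Real.rpow_add h1x]
            congr 1
            ring
          rw [← hp, ← hr]
          ring
  have hint_eq : ∫ x in (0:ℝ)..1, Tfun ν N n x * Tfun ν N m x * (1 - x ^ 2) ^ ν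
      = ∫ x in (0:ℝ)..1, F x := by
    rw [intervalIntegral.integral_of_le (by norm_num : (0:ℝ) ≤ 1),
      intervalIntegral.integral_of_le (by norm_num : (0:ℝ) ≤ 1),
      integral_Ioc_eq_integral_Ioo, integral_Ioc_eq_integral_Ioo]
    exact setIntegral_congr_fun measurableSet_Ioo hEq
  -- Step B: integrate term by term
  have hsi : ∀ (i l : ℕ), -1 < ν + (i:ℝ) := by
    intro i l
    have : (0:ℝ) ≤ i := Nat.cast_nonneg i
    linarith
  have hint_terms : ∀ p ∈ Finset.range (n+1) ×ˢ Finset.range (m+1),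
      IntervalIntegrable (fun x : ℝ =>
        cco ν N n p.1 * aco ν N m p.2 * (x ^ (2*(N+p.2)+1) * (1 - x^2) ^ (ν + p.1)))
        volume 0 1 := by
    rintro ⟨i, l⟩ _
    exact (J_integrable (N+l) (hsi i l)).const_mul _
  have hFint : ∫ x in (0:ℝ)..1, F x
      = ∑ p ∈ Finset.range (n+1) ×ˢ Finset.range (m+1),
          cco ν N n p.1 * aco ν N m p.2 *
            (((N+p.2).factorial : ℝ) / (2 * poch (ν + p.1 + 1) (N + p.2 + 1))) := by
    rw [hF, intervalIntegral.integral_finset_sum hint_terms]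
    apply Finset.sum_congr rfl
    rintro ⟨i, l⟩ _
    simp only
    rw [intervalIntegral.integral_const_mul, J_value (N+l) (hsi i l)]
  -- Step C: sum over l via Chu–Vandermonde
  have hsum : ∑ p ∈ Finset.range (n+1) ×ˢ Finset.range (m+1),
      cco ν N n p.1 * aco ν N m p.2 *
        (((N+p.2).factorial : ℝ) / (2 * poch (ν + p.1 + 1) (N + p.2 + 1)))
      = ∑ i ∈ Finset.range (n+1), (cco ν N n i / 2) *
          ((N.factorial : ℝ) * poch ((i:ℝ) + 1 - m) m /
            (poch (ν + i + 1) (N + 1) * poch (ν + i + N + 2) m)) := by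
    rw [Finset.sum_product]
    apply Finset.sum_congr rfl
    intro i _
    rw [← G_eval ν hν N m i, Finset.mul_sum]
    apply Finset.sum_congr rfl
    intro l _
    ring
  rw [hint_eq, hFint, hsum]
  by_cases hcase : n = m
  · -- diagonal case
    subst hcase
    rw [Finset.sum_eq_single_of_mem n (Finset.self_mem_range_succ n)
      (fun i _ hi => by
        have hilt : i < n := by
          rcases Finset.mem_range.mp (by assumption : i ∈ Finset.range (n+1)) with h
          omega
        rw [poch_neg_vanish hilt]
        ring)]
    rw [if_pos rfl, one_mul]
    -- evaluate cco n n
    have hcco : cco ν N n n = (N.factorial : ℝ) * poch ((n:ℝ) + N + ν + 1) n / (N + n).factorial := by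
      unfold cco
      rw [Finset.sum_eq_single_of_mem n (Finset.self_mem_range_succ n)
        (fun k hk hkn => by
          have : k < n := by
            rcases Finset.mem_range.mp hk with h
            omega
          rw [Nat.choose_eq_zero_of_lt this]
          simp)]
      have h1 : poch (-(n:ℝ)) n = (-1)^n * (n.factorial : ℝ) := by
        rw [poch_neg_nat, ffall_nat_eq n n le_rfl, Nat.choose_self]
        push_cast; ring
      have h2 : poch ((N:ℝ) + 1) n = ((N+n).factorial : ℝ) / N.factorial := by
        rw [eq_div_iff (Nat.cast_ne_zero.mpr (Nat.factorial_ne_zero N))]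
        rw [mul_comm]
        exact poch_nat_factorial N n
      have hNfac : (N.factorial : ℝ) ≠ 0 := Nat.cast_ne_zero.mpr (Nat.factorial_ne_zero N)
      have hnfac : (n.factorial : ℝ) ≠ 0 := Nat.cast_ne_zero.mpr (Nat.factorial_ne_zero n)
      have hNnfac : ((N+n).factorial : ℝ) ≠ 0 := Nat.cast_ne_zero.mpr (Nat.factorial_ne_zero _)
      have haco : aco ν N n n
          = (-1)^n * ((N.factorial : ℝ) * poch ((n:ℝ) + N + ν + 1) n / (N + n).factorial) := by
        unfold aco
        rw [h1, h2]
        field_simp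
      have hsq : ((-1:ℝ))^n * (-1:ℝ)^n = 1 := by
        rw [← pow_add]
        exact Even.neg_one_pow ⟨n, by ring⟩
      rw [Nat.choose_self, Nat.cast_one, mul_one, haco, ← mul_assoc, hsq, one_mul]
    rw [hcco]
    rw [show poch ((n:ℝ) + 1 - n) n = poch 1 n by congr 1; ring, poch_one_eq]
    -- final algebra
    have hnν : (0:ℝ) < (n:ℝ) + ν + 1 := by
      have : (0:ℝ) ≤ n := Nat.cast_nonneg n
      linarith
    have hGamma : Real.Gamma ((n:ℝ) + N + ν + 1)
        = Real.Gamma ((n:ℝ) + ν + 1) * poch ((n:ℝ) + ν + 1) N := by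
      rw [← Gamma_add_nat hnν N]
      congr 1
      ring
    rw [hGamma]
    have hpochid : poch ((n:ℝ) + N + ν + 1) n * ((n:ℝ) + N + ν + 1 + n)
        = ((n:ℝ) + N + ν + 1) * poch ((n:ℝ) + N + ν + 2) n := by
      have h1 := poch_succ ((n:ℝ) + N + ν + 1) n
      have h2 := poch_succ' ((n:ℝ) + N + ν + 1) n
      rw [h1] at h2
      rw [h2]
      congr 2
      ring
    have hB : poch (ν + (n:ℝ) + 1) (N + 1) = poch ((n:ℝ) + ν + 1) N * ((n:ℝ) + ν + 1 + N) := by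
      have := poch_succ (ν + (n:ℝ) + 1) N
      rw [this]
      rw [show ν + (n:ℝ) + 1 = (n:ℝ) + ν + 1 by ring]
    have hC : poch (ν + (n:ℝ) + N + 2) n = poch ((n:ℝ) + N + ν + 2) n := by
      congr 1; ring
    rw [hB, hC]
    have hGpos : (0:ℝ) < Real.Gamma ((n:ℝ) + ν + 1) := Real.Gamma_pos_of_pos hnν
    have hD : (0:ℝ) < poch ((n:ℝ) + ν + 1) N := poch_pos hnν N
    have hA2 : (0:ℝ) < poch ((n:ℝ) + N + ν + 2) n := by
      apply poch_pos
      have h1 : (0:ℝ) ≤ n := Nat.cast_nonneg n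
      have h2 : (0:ℝ) ≤ N := Nat.cast_nonneg N
      linarith
    have htot : (0:ℝ) < 2 * (n:ℝ) + N + ν + 1 := by
      have h1 : (0:ℝ) ≤ n := Nat.cast_nonneg n
      have h2 : (0:ℝ) ≤ N := Nat.cast_nonneg N
      linarith
    have hfacNn : ((N+n).factorial : ℝ) ≠ 0 := Nat.cast_ne_zero.mpr (Nat.factorial_ne_zero _)
    have hfacnN : ((n+N).factorial : ℝ) ≠ 0 := Nat.cast_ne_zero.mpr (Nat.factorial_ne_zero _)
    have hswap : ((n+N).factorial : ℝ) = ((N+n).factorial : ℝ) := by rw [Nat.add_comm]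
    have hbase2 : (0:ℝ) < (n:ℝ) + ν + 1 + N := by
      have h2 : (0:ℝ) ≤ N := Nat.cast_nonneg N
      linarith
    have hA' : poch ((n:ℝ) + N + ν + 1) n
        = ((n:ℝ) + N + ν + 1) * poch ((n:ℝ) + N + ν + 2) n / (2*(n:ℝ) + N + ν + 1) := by
      rw [eq_div_iff (ne_of_gt htot)]
      linear_combination hpochid
    rw [hswap, hA']
    field_simp
    ring
  · -- off-diagonal case: n < m
    have hlt : n < m := lt_of_le_of_ne hnm hcase
    rw [if_neg hcase, zero_mul]
    apply Finset.sum_eq_zero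
    intro i hi
    have : i < m := by
      have := Finset.mem_range.mp hi
      omega
    rw [poch_neg_vanish this]
    ring

theorem Tfun_orthogonality (ν : ℝ) (hν : ν > -1) (N n m : ℕ) :
    ∫ x in (0:ℝ)..1, Tfun ν N n x * Tfun ν N m x * (1 - x ^ 2) ^ ν
      = (if n = m then (1:ℝ) else 0) *
          ((n.factorial : ℝ) * (N.factorial : ℝ) ^ 2 * Real.Gamma (n + ν + 1) /
            (2 * (2 * n + N + ν + 1) * (n + N).factorial * Real.Gamma (n + N + ν + 1))) := by
  rcases le_or_gt n m with hnm | hmn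
  · exact key_orthogonality ν hν N n m hnm
  · have hne : n ≠ m := Nat.ne_of_gt hmn
    have hcomm : ∫ x in (0:ℝ)..1, Tfun ν N n x * Tfun ν N m x * (1 - x ^ 2) ^ ν
        = ∫ x in (0:ℝ)..1, Tfun ν N m x * Tfun ν N n x * (1 - x ^ 2) ^ ν := by
      apply intervalIntegral.integral_congr
      intro x _
      simp only
      ring
    rw [hcomm, key_orthogonality ν hν N m n (le_of_lt hmn), if_neg (Ne.symm hne), if_neg hne,
      zero_mul, zero_mul]
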